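/- (Theorem 1, Pollak-like criterion, single change-point.) Let T ≥ 1 and let τ be a stopping time of (F_t) with τ ≥ 1, P∞(τ < ∞) = 1, and 0 < E∞[τ] < ∞. Suppose c ≥ 0 is a constant such that for every γ ≥ 1, c·P∞(τ ≥ γ) ≤ P_γ(τ = γ). Then c·E∞[τ] ≤ E∞[ℓ(X_τ)], where the right-hand side is the (possibly infinite) integral of ℓ(X_τ) under P∞. In particular, inf_{γ≥1} P_γ(τ = γ | τ ≥ γ) ≤ E∞[ℓ(X_τ)] / E∞[τ]. -/

import Mathlib

/-!
Context: μ0, μ1 probability measures on E, μ1 ≪ μ0, ℓ := dμ1/dμ0.  Sequence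
space Ω := ℕ → E, coordinates X_t ω = ω t.  For γ ≥ 1, `P γ` makes the
coordinates independent with X_t ~ μ1 for γ ≤ t ≤ γ+T−1 and X_t ~ μ0
otherwise; `Pinf` makes them i.i.d. ~ μ0, with expectation E∞.
F_t = σ(X_1,…,X_t), and a stopping time τ is ℕ≥1 ∪ {∞}-valued with
{τ ≤ t} ∈ F_t for all t.

STATEMENT 5 (Theorem 1, Pollak-like criterion, single change-point): if τ ≥ 1,
P∞(τ < ∞) = 1, 0 < E∞[τ] < ∞, and c ≥ 0 satisfies c·P∞(τ ≥ γ) ≤ P_γ(τ = γ) for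
every γ ≥ 1, then c·E∞[τ] ≤ E∞[ℓ(X_τ)] (possibly infinite integral).  In
particular, inf_{γ≥1} P_γ(τ = γ | τ ≥ γ) ≤ E∞[ℓ(X_τ)] / E∞[τ], where
P_γ(τ = γ | τ ≥ γ) := P_γ(τ = γ)/P_γ(τ ≥ γ), equal to 0 when P_γ(τ ≥ γ) = 0
(the ℝ≥0∞ convention 0/0 = 0 applies, as P_γ(τ = γ) ≤ P_γ(τ ≥ γ)).
-/

open MeasureTheory ProbabilityTheory
open scoped ENNReal NNReal

/-- The natural filtration `F_t = σ(X_1, …, X_t)` on the sequence space. -/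
def natF (E : Type*) [MeasurableSpace E] (t : ℕ) : MeasurableSpace (ℕ → E) :=
  ⨆ i ∈ Finset.Icc 1 t, MeasurableSpace.comap (fun ω : ℕ → E => ω i) inferInstance

section aux
variable {E : Type*} [MeasurableSpace E]

lemma natF_le (n : ℕ) : natF E n ≤ (inferInstance : MeasurableSpace (ℕ → E)) :=
  iSup₂_le fun i _ => measurable_iff_comap_le.mp (measurable_pi_apply i)

lemma natF_mono {s t : ℕ} (h : s ≤ t) : natF E s ≤ natF E t :=
  iSup₂_le fun i hi => le_iSup₂ (f := fun i (_ : i ∈ Finset.Icc 1 t) =>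
    MeasurableSpace.comap (fun ω : ℕ → E => ω i) inferInstance) i
    (Finset.mem_Icc.mpr ⟨(Finset.mem_Icc.mp hi).1, le_trans (Finset.mem_Icc.mp hi).2 h⟩)

lemma natF_eq_generateFrom (n : ℕ) :
    natF E n = MeasurableSpace.generateFrom
      (piiUnionInter (fun i => {s : Set (ℕ → E) |
        MeasurableSet[MeasurableSpace.comap (fun ω : ℕ → E => ω i) inferInstance] s})
        (Set.Icc 1 n)) := by
  refine Eq.trans ?_ (generateFrom_piiUnionInter_measurableSet _ _).symm
  refine le_antisymm (iSup₂_le fun i hi => ?_) (iSup₂_le fun i hi => ?_)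
  · exact le_iSup₂ (f := fun i (_ : i ∈ Set.Icc 1 n) =>
      MeasurableSpace.comap (fun ω : ℕ → E => ω i) inferInstance) i
      (Set.mem_Icc.mpr (Finset.mem_Icc.mp hi))
  · exact le_iSup₂ (f := fun i (_ : i ∈ Finset.Icc 1 n) =>
      MeasurableSpace.comap (fun ω : ℕ → E => ω i) inferInstance) i
      (Finset.mem_Icc.mpr (Set.mem_Icc.mp hi))

lemma agree_on_natF (m1 m2 : Measure (ℕ → E)) [IsProbabilityMeasure m1] [IsProbabilityMeasure m2]
    (n : ℕ)
    (h : ∀ t : Finset ℕ, ↑t ⊆ Set.Icc 1 n → ∀ u : ℕ → Set E, (∀ x ∈ t, MeasurableSet (u x)) →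
      m1 (⋂ x ∈ t, (fun ω : ℕ → E => ω x) ⁻¹' u x) = m2 (⋂ x ∈ t, (fun ω : ℕ → E => ω x) ⁻¹' u x))
    {A : Set (ℕ → E)} (hA : MeasurableSet[natF E n] A) : m1 A = m2 A := by
  have hle := natF_le (E := E) n
  refine MeasurableSpace.induction_on_inter (C := fun A _ => m1 A = m2 A) (m := natF E n) (natF_eq_generateFrom n)
      (isPiSystem_piiUnionInter _ (fun i => @MeasurableSpace.isPiSystem_measurableSet _
        (MeasurableSpace.comap (fun ω : ℕ → E => ω i) inferInstance)) _) ?_ ?_ ?_ ?_ _ hA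
  · simp
  · rintro s ⟨t, htS, f, hf, rfl⟩
    have hu : ∀ x : ℕ, ∃ u : Set E, MeasurableSet u ∧
        (x ∈ t → (fun ω : ℕ → E => ω x) ⁻¹' u = f x) := by
      intro x
      by_cases hx : x ∈ t
      · obtain ⟨u, hum, hueq⟩ := MeasurableSpace.measurableSet_comap.mp (hf x hx)
        exact ⟨u, hum, fun _ => hueq⟩
      · exact ⟨∅, MeasurableSet.empty, fun hxx => absurd hxx hx⟩
    choose u hum hueq using hu
    have heq : ⋂ x ∈ t, f x = ⋂ x ∈ t, (fun ω : ℕ → E => ω x) ⁻¹' u x :=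
      Set.iInter₂_congr fun x hx => (hueq x hx).symm
    rw [heq]
    exact h t htS u fun x _ => hum x
  · intro s hs h1
    rw [prob_compl_eq_one_sub (hle _ hs), prob_compl_eq_one_sub (hle _ hs), h1]
  · intro f hdisj hmeas heq
    rw [measure_iUnion hdisj fun i => hle _ (hmeas i),
      measure_iUnion hdisj fun i => hle _ (hmeas i)]
    exact tsum_congr heq

lemma meas_biInter_eq_prod (m : Measure (ℕ → E))
    (hind : iIndepFun
      (fun t (ω : ℕ → E) => ω t) m)
    (t : Finset ℕ) (u : ℕ → Set E) (hu : ∀ x ∈ t, MeasurableSet (u x)) :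
    m (⋂ x ∈ t, (fun ω : ℕ → E => ω x) ⁻¹' u x)
      = ∏ x ∈ t, (m.map (fun ω : ℕ → E => ω x)) (u x) := by
  rw [iIndepFun_iff_measure_inter_preimage_eq_mul.1 hind t fun x hx => hu x hx]
  exact Finset.prod_congr rfl fun x hx =>
    (Measure.map_apply (measurable_pi_apply x) (hu x hx)).symm

end aux

section key
variable {E : Type*} [MeasurableSpace E]

/-- On `F_γ`, the measure `Pg` (coords `~ μ1` at `γ`, `~ μ0` before) has density `ℓ(X_γ)`
w.r.t. `Pinf`. -/
lemma Pg_eq_withDensity (μ0 μ1 : Measure E) [IsProbabilityMeasure μ0] [IsProbabilityMeasure μ1]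
    (hac : μ1 ≪ μ0)
    (Pinf : Measure (ℕ → E)) [IsProbabilityMeasure Pinf]
    (hPinf_indep : iIndepFun
      (fun t (ω : ℕ → E) => ω t) Pinf)
    (hPinf_marg : ∀ t : ℕ, Pinf.map (fun ω => ω t) = μ0)
    (Pg : Measure (ℕ → E)) [IsProbabilityMeasure Pg]
    (hPg_indep : iIndepFun
      (fun t (ω : ℕ → E) => ω t) Pg)
    (γ : ℕ)
    (hPg_marg : ∀ t : ℕ, t ≤ γ → Pg.map (fun ω : ℕ → E => ω t) = if t = γ then μ1 else μ0)
    {A : Set (ℕ → E)} (hA : MeasurableSet[natF E γ] A) :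
    Pg A = ∫⁻ ω in A, μ1.rnDeriv μ0 (ω γ) ∂Pinf := by
  classical
  set ℓ : E → ℝ≥0∞ := μ1.rnDeriv μ0 with hℓdef
  have hℓ : Measurable ℓ := Measure.measurable_rnDeriv μ1 μ0
  have hdens : Measurable fun ω : ℕ → E => ℓ (ω γ) := hℓ.comp (measurable_pi_apply γ)
  set Q : Measure (ℕ → E) := Pinf.withDensity (fun ω => ℓ (ω γ)) with hQdef
  have hQuniv : Q Set.univ = 1 := by
    rw [hQdef, withDensity_apply _ MeasurableSet.univ, Measure.restrict_univ,
      ← lintegral_map hℓ (measurable_pi_apply γ), hPinf_marg γ,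
      Measure.lintegral_rnDeriv hac, measure_univ]
  haveI : IsProbabilityMeasure Q := ⟨hQuniv⟩
  rw [← withDensity_apply _ (natF_le γ _ hA)]
  refine agree_on_natF Pg Q γ ?_ hA
  intro t htS u hu
  rw [meas_biInter_eq_prod Pg hPg_indep t u hu]
  -- compute the left product
  have hprodL : ∏ x ∈ t, (Pg.map fun ω : ℕ → E => ω x) (u x)
      = ∏ x ∈ t, (if x = γ then μ1 (u x) else μ0 (u x)) := by
    refine Finset.prod_congr rfl fun x hx => ?_
    have hxγ : x ≤ γ := (Set.mem_Icc.mp (htS hx)).2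
    rw [hPg_marg x hxγ]
    by_cases h : x = γ <;> simp [h]
  rw [hprodL]
  -- decompose the intersection
  set B : Set E := if γ ∈ t then u γ else Set.univ with hB
  have hBm : MeasurableSet B := by
    by_cases h : γ ∈ t <;> simp only [hB, if_pos, if_neg, h]
    · exact hu γ h
    · exact MeasurableSet.univ
  set A' : Set (ℕ → E) := ⋂ x ∈ t.erase γ, (fun ω : ℕ → E => ω x) ⁻¹' u x with hA'
  have hA'm : MeasurableSet A' :=
    Finset.measurableSet_biInter _ fun x hx =>
      (measurable_pi_apply x) (hu x (Finset.mem_of_mem_erase hx))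
  have hsetdec : (⋂ x ∈ t, (fun ω : ℕ → E => ω x) ⁻¹' u x)
      = ((fun ω : ℕ → E => ω γ) ⁻¹' B) ∩ A' := by
    by_cases hγt : γ ∈ t
    · rw [hB, if_pos hγt, hA']
      conv_lhs => rw [← Finset.insert_erase hγt]
      rw [Finset.set_biInter_insert]
    · rw [hB, if_neg hγt, hA', Finset.erase_eq_of_notMem hγt]
      simp
  -- independence
  have hcomap_le : ∀ i : ℕ, MeasurableSpace.comap (fun ω : ℕ → E => ω i)
      (inferInstance : MeasurableSpace E) ≤ (MeasurableSpace.pi :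
        MeasurableSpace (ℕ → E)) :=
    fun i => measurable_iff_comap_le.mp (measurable_pi_apply i)
  have hMg_le : (⨆ x ∈ (↑(t.erase γ) : Set ℕ),
      MeasurableSpace.comap (fun ω : ℕ → E => ω x) inferInstance)
      ≤ (MeasurableSpace.pi : MeasurableSpace (ℕ → E)) :=
    iSup₂_le fun i _ => hcomap_le i
  have hindep : Indep (MeasurableSpace.comap (fun ω : ℕ → E => ω γ) inferInstance)
      (⨆ x ∈ (↑(t.erase γ) : Set ℕ),
        MeasurableSpace.comap (fun ω : ℕ → E => ω x) inferInstance) Pinf := by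
    have hd : Disjoint ({γ} : Set ℕ) (↑(t.erase γ) : Set ℕ) := by
      simp [Set.disjoint_singleton_left]
    have h := indep_iSup_of_disjoint (m := fun i : ℕ =>
        MeasurableSpace.comap (fun ω : ℕ → E => ω i) inferInstance)
        hcomap_le hPinf_indep.iIndep hd
    have hsing : (⨆ i ∈ ({γ} : Set ℕ), MeasurableSpace.comap
        (fun ω : ℕ → E => ω i) (inferInstance : MeasurableSpace E))
        = MeasurableSpace.comap (fun ω : ℕ → E => ω γ) inferInstance := by
      simp
    rwa [hsing] at h
  have hA'Mg : MeasurableSet[⨆ x ∈ (↑(t.erase γ) : Set ℕ),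
      MeasurableSpace.comap (fun ω : ℕ → E => ω x) inferInstance] A' := by
    rw [hA']
    refine @Finset.measurableSet_biInter (ℕ → E) ℕ (⨆ x ∈ (↑(t.erase γ) : Set ℕ),
      MeasurableSpace.comap (fun ω : ℕ → E => ω x) inferInstance) _ (t.erase γ)
      fun x hx => ?_
    exact (le_iSup₂ (f := fun i (_ : i ∈ (↑(t.erase γ) : Set ℕ)) =>
        MeasurableSpace.comap (fun ω : ℕ → E => ω i)
        (inferInstance : MeasurableSpace E)) x (Finset.mem_coe.mpr hx)) _
      ⟨u x, hu x (Finset.mem_of_mem_erase hx), rfl⟩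
  have hmeasf : Measurable[MeasurableSpace.comap (fun ω : ℕ → E => ω γ) inferInstance]
      (fun ω : ℕ → E => B.indicator ℓ (ω γ)) :=
    (hℓ.indicator hBm).comp (Measurable.of_comap_le le_rfl)
  have hmeasg : Measurable[⨆ x ∈ (↑(t.erase γ) : Set ℕ),
      MeasurableSpace.comap (fun ω : ℕ → E => ω x) inferInstance]
      (A'.indicator (fun _ => (1 : ℝ≥0∞))) :=
    (@measurable_const ℝ≥0∞ (ℕ → E) _ _ 1).indicator hA'Mg
  -- compute Q of the intersection
  have hpoint : ∀ ω : ℕ → E,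
      Set.indicator (((fun ω : ℕ → E => ω γ) ⁻¹' B) ∩ A') (fun ω => ℓ (ω γ)) ω
        = B.indicator ℓ (ω γ) * A'.indicator (fun _ => (1 : ℝ≥0∞)) ω := by
    intro ω
    by_cases h1 : ω γ ∈ B <;> by_cases h2 : ω ∈ A'
    · rw [Set.indicator_of_mem (Set.mem_inter (show ω ∈ (fun ω : ℕ → E => ω γ) ⁻¹' B from h1) h2), Set.indicator_of_mem h1,
        Set.indicator_of_mem h2, mul_one]
    · rw [Set.indicator_of_notMem (fun h => h2 h.2), Set.indicator_of_notMem h2, mul_zero]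
    · rw [Set.indicator_of_notMem (fun h => h1 h.1), Set.indicator_of_notMem h1, zero_mul]
    · rw [Set.indicator_of_notMem (fun h => h2 h.2), Set.indicator_of_notMem h2, mul_zero]
  have hone : (fun ω : ℕ → E => A'.indicator (fun _ => (1 : ℝ≥0∞)) ω)
      = A'.indicator (1 : (ℕ → E) → ℝ≥0∞) := rfl
  have hQval : Q (⋂ x ∈ t, (fun ω : ℕ → E => ω x) ⁻¹' u x)
      = μ1 B * Pinf A' := by
    rw [hQdef, hsetdec, withDensity_apply _ (((measurable_pi_apply γ) hBm).inter hA'm),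
      ← lintegral_indicator (((measurable_pi_apply γ) hBm).inter hA'm)]
    calc ∫⁻ ω, Set.indicator (((fun ω : ℕ → E => ω γ) ⁻¹' B) ∩ A') (fun ω => ℓ (ω γ)) ω ∂Pinf
        = ∫⁻ ω, B.indicator ℓ (ω γ) * A'.indicator (fun _ => (1 : ℝ≥0∞)) ω ∂Pinf :=
          lintegral_congr hpoint
      _ = (∫⁻ ω, B.indicator ℓ (ω γ) ∂Pinf) * ∫⁻ ω, A'.indicator (fun _ => (1 : ℝ≥0∞)) ω ∂Pinf :=
          lintegral_mul_eq_lintegral_mul_lintegral_of_independent_measurableSpace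
            (hcomap_le γ) hMg_le hindep hmeasf hmeasg
      _ = μ1 B * Pinf A' := by
          rw [← lintegral_map (hℓ.indicator hBm) (measurable_pi_apply γ), hPinf_marg γ,
            lintegral_indicator hBm, Measure.setLIntegral_rnDeriv hac, hone,
            lintegral_indicator_one hA'm]
  rw [hQval]
  -- compute Pinf A' as a product
  have hPinfA' : Pinf A' = ∏ x ∈ t.erase γ, μ0 (u x) := by
    rw [hA', meas_biInter_eq_prod Pinf hPinf_indep _ u
      (fun x hx => hu x (Finset.mem_of_mem_erase hx))]
    exact Finset.prod_congr rfl fun x hx => by rw [hPinf_marg x]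
  rw [hPinfA']
  by_cases hγt : γ ∈ t
  · rw [← Finset.mul_prod_erase t _ hγt, if_pos rfl, hB, if_pos hγt]
    exact congrArg _ (Finset.prod_congr rfl fun x hx => if_neg (Finset.ne_of_mem_erase hx))
  · rw [hB, if_neg hγt, measure_univ, one_mul, Finset.erase_eq_of_notMem hγt]
    exact Finset.prod_congr rfl fun x hx => if_neg (fun (h : x = γ) => hγt (h ▸ hx))

end key

theorem stmt_5
    {E : Type*} [MeasurableSpace E]
    (μ0 μ1 : Measure E) [IsProbabilityMeasure μ0] [IsProbabilityMeasure μ1]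
    (hac : μ1 ≪ μ0)
    (T : ℕ) (hT : 1 ≤ T)
    (Pinf : Measure (ℕ → E)) [IsProbabilityMeasure Pinf]
    (hPinf_indep :
      iIndepFun
        (fun t (ω : ℕ → E) => ω t) Pinf)
    (hPinf_marg : ∀ t : ℕ, Pinf.map (fun ω => ω t) = μ0)
    (P : ℕ → Measure (ℕ → E))
    (hP_prob : ∀ γ, 1 ≤ γ → IsProbabilityMeasure (P γ))
    (hP_indep : ∀ γ, 1 ≤ γ →
      iIndepFun
        (fun t (ω : ℕ → E) => ω t) (P γ))
    (hP_marg : ∀ γ, 1 ≤ γ → ∀ t : ℕ,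
      (P γ).map (fun ω => ω t) = if γ ≤ t ∧ t < γ + T then μ1 else μ0)
    (τ : (ℕ → E) → ℕ∞)
    (hτ1 : ∀ ω, 1 ≤ τ ω)
    (hτ_stop : ∀ t : ℕ, MeasurableSet[natF E t] {ω | τ ω ≤ (t : ℕ∞)})
    (hτ_fin : Pinf {ω | τ ω ≠ ⊤} = 1)
    (hτ_pos : 0 < ∫⁻ ω, (τ ω : ℝ≥0∞) ∂Pinf)
    (hτ_int : ∫⁻ ω, (τ ω : ℝ≥0∞) ∂Pinf < ⊤)
    (c : ℝ≥0∞)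
    (hc : ∀ γ : ℕ, 1 ≤ γ →
      c * Pinf {ω | (γ : ℕ∞) ≤ τ ω} ≤ P γ {ω | τ ω = (γ : ℕ∞)}) :
    c * ∫⁻ ω, (τ ω : ℝ≥0∞) ∂Pinf
        ≤ ∫⁻ ω, μ1.rnDeriv μ0 (ω (τ ω).toNat) ∂Pinf ∧
      (⨅ γ : {n : ℕ // 1 ≤ n},
          P γ {ω | τ ω = (γ : ℕ∞)} / P γ {ω | ((γ : ℕ) : ℕ∞) ≤ τ ω})
        ≤ (∫⁻ ω, μ1.rnDeriv μ0 (ω (τ ω).toNat) ∂Pinf)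
            / ∫⁻ ω, (τ ω : ℝ≥0∞) ∂Pinf := by
  classical
  -- basic ENat facts
  have hcast : ∀ (n : ℕ) (x : ℕ∞), (((n + 1 : ℕ)) : ℕ∞) ≤ x ↔ (n : ℕ∞) < x := by
    intro n x
    rw [Nat.cast_add, Nat.cast_one]
    exact ENat.add_one_le_iff (ENat.coe_ne_top n)
  -- set identities
  have hS2 : ∀ n : ℕ, {ω : ℕ → E | (((n + 1 : ℕ)) : ℕ∞) ≤ τ ω} = {ω | τ ω ≤ (n : ℕ∞)}ᶜ := by
    intro n
    ext ω
    simp only [Set.mem_setOf_eq, Set.mem_compl_iff, not_le]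
    exact hcast n (τ ω)
  have hS1 : ∀ n : ℕ, {ω : ℕ → E | τ ω = (((n + 1 : ℕ)) : ℕ∞)}
      = {ω | τ ω ≤ (((n + 1 : ℕ)) : ℕ∞)} ∩ {ω | τ ω ≤ (n : ℕ∞)}ᶜ := by
    intro n
    ext ω
    simp only [Set.mem_setOf_eq, Set.mem_inter_iff, Set.mem_compl_iff, not_le]
    constructor
    · intro h
      refine ⟨le_of_eq h, ?_⟩
      rw [h]
      exact_mod_cast Nat.lt_succ_self n
    · rintro ⟨h1, h2⟩
      exact le_antisymm h1 ((hcast n (τ ω)).mpr h2)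
  -- measurability
  have hMle : ∀ n : ℕ, MeasurableSet {ω : ℕ → E | τ ω ≤ (n : ℕ∞)} :=
    fun n => natF_le n _ (hτ_stop n)
  have hMge : ∀ n : ℕ, MeasurableSet {ω : ℕ → E | (((n + 1 : ℕ)) : ℕ∞) ≤ τ ω} := by
    intro n; rw [hS2 n]; exact (hMle n).compl
  have hMeq : ∀ n : ℕ, MeasurableSet {ω : ℕ → E | τ ω = (((n + 1 : ℕ)) : ℕ∞)} := by
    intro n; rw [hS1 n]; exact (hMle (n + 1)).inter (hMle n).compl
  have hFeq : ∀ n : ℕ, MeasurableSet[natF E (n + 1)] {ω : ℕ → E | τ ω = (((n + 1 : ℕ)) : ℕ∞)} := by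
    intro n
    rw [hS1 n]
    exact (hτ_stop (n + 1)).inter ((natF_mono (Nat.le_succ n) _ (hτ_stop n)).compl)
  -- layer cake
  have key1 : ∫⁻ ω, (τ ω : ℝ≥0∞) ∂Pinf
      = ∑' n : ℕ, Pinf {ω | (((n + 1 : ℕ)) : ℕ∞) ≤ τ ω} := by
    have hpt : ∀ ω : ℕ → E, (τ ω : ℝ≥0∞)
        = ∑' n : ℕ, {ω' : ℕ → E | (((n + 1 : ℕ)) : ℕ∞) ≤ τ ω'}.indicator
            (fun _ => (1 : ℝ≥0∞)) ω := by
      intro ω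
      simp only [Set.indicator_apply, Set.mem_setOf_eq]
      by_cases htop : τ ω = ⊤
      · simp only [htop, ENat.toENNReal_top]
        have : ∀ n : ℕ, (if (((n + 1 : ℕ)) : ℕ∞) ≤ (⊤ : ℕ∞) then (1 : ℝ≥0∞) else 0) = 1 :=
          fun n => if_pos le_top
        rw [tsum_congr this]
        exact (ENNReal.tsum_const_eq_top_of_ne_zero one_ne_zero).symm
      · obtain ⟨k, hk⟩ : ∃ k : ℕ, τ ω = (k : ℕ∞) := ⟨(τ ω).toNat, (ENat.coe_toNat htop).symm⟩
        simp only [hk, ENat.toENNReal_coe]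
        rw [tsum_eq_sum (s := Finset.range k) (fun n hn => if_neg (fun h =>
          hn (Finset.mem_range.mpr (Nat.lt_of_succ_le (by exact_mod_cast h)))))]
        symm
        calc ∑ n ∈ Finset.range k, (if (((n + 1 : ℕ)) : ℕ∞) ≤ (k : ℕ∞) then (1 : ℝ≥0∞) else 0)
            = ∑ _n ∈ Finset.range k, (1 : ℝ≥0∞) := Finset.sum_congr rfl fun n hn =>
              if_pos (by exact_mod_cast Nat.succ_le_of_lt (Finset.mem_range.mp hn))
          _ = (k : ℝ≥0∞) := by
              rw [Finset.sum_const, Finset.card_range, nsmul_eq_mul, mul_one]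
    rw [lintegral_congr hpt,
      lintegral_tsum (fun n => (measurable_const.indicator (hMge n)).aemeasurable)]
    refine tsum_congr fun n => ?_
    have h1 : ({ω' : ℕ → E | (((n + 1 : ℕ)) : ℕ∞) ≤ τ ω'}.indicator
        (fun _ => (1 : ℝ≥0∞))) = ({ω' : ℕ → E | (((n + 1 : ℕ)) : ℕ∞) ≤ τ ω'}.indicator
        (1 : (ℕ → E) → ℝ≥0∞)) := rfl
    rw [h1, lintegral_indicator_one (hMge n)]
  -- density identity at each γ = n+1
  have key2 : ∀ n : ℕ, P (n + 1) {ω : ℕ → E | τ ω = (((n + 1 : ℕ)) : ℕ∞)}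
      = ∫⁻ ω in {ω : ℕ → E | τ ω = (((n + 1 : ℕ)) : ℕ∞)}, μ1.rnDeriv μ0 (ω (n + 1)) ∂Pinf := by
    intro n
    haveI := hP_prob (n + 1) (Nat.succ_le_succ (Nat.zero_le n))
    refine Pg_eq_withDensity μ0 μ1 hac Pinf hPinf_indep hPinf_marg (P (n + 1))
      (hP_indep (n + 1) (Nat.succ_le_succ (Nat.zero_le n))) (n + 1) ?_ (hFeq n)
    intro t ht
    rw [hP_marg (n + 1) (Nat.succ_le_succ (Nat.zero_le n)) t]
    by_cases h : t = n + 1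
    · rw [if_pos h, if_pos (by omega)]
    · rw [if_neg (by omega), if_neg h]
  -- summing the densities is below the full integral
  have key3 : (∑' n : ℕ, ∫⁻ ω in {ω : ℕ → E | τ ω = (((n + 1 : ℕ)) : ℕ∞)},
        μ1.rnDeriv μ0 (ω (n + 1)) ∂Pinf)
      ≤ ∫⁻ ω, μ1.rnDeriv μ0 (ω (τ ω).toNat) ∂Pinf := by
    have hup : ∀ ω : ℕ → E,
        (∑' n : ℕ, ({ω' : ℕ → E | τ ω' = (((n + 1 : ℕ)) : ℕ∞)}.indicator
          (fun ω' => μ1.rnDeriv μ0 (ω' (n + 1)))) ω)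
        ≤ μ1.rnDeriv μ0 (ω (τ ω).toNat) := by
      intro ω
      simp only [Set.indicator_apply, Set.mem_setOf_eq]
      by_cases htop : τ ω = ⊤
      · have hz : ∀ n : ℕ, (if τ ω = (((n + 1 : ℕ)) : ℕ∞) then μ1.rnDeriv μ0 (ω (n + 1)) else 0)
            = 0 := fun n => if_neg (by rw [htop]; exact fun h => (ENat.coe_ne_top (n+1)) h.symm)
        rw [tsum_congr hz, tsum_zero]
        exact zero_le
      · obtain ⟨k, hk⟩ : ∃ k : ℕ, τ ω = (k : ℕ∞) := ⟨(τ ω).toNat, (ENat.coe_toNat htop).symm⟩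
        have h1k : 1 ≤ k := by
          have := hτ1 ω
          rw [hk] at this
          exact_mod_cast this
        obtain ⟨m, rfl⟩ : ∃ m, k = m + 1 := ⟨k - 1, by omega⟩
        rw [tsum_eq_single m (fun n hnm => if_neg (fun h => hnm
          (Nat.succ_injective (by exact_mod_cast hk.symm.trans h)).symm))]
        rw [if_pos hk, hk, ENat.toNat_coe]
    calc (∑' n : ℕ, ∫⁻ ω in {ω : ℕ → E | τ ω = (((n + 1 : ℕ)) : ℕ∞)},
          μ1.rnDeriv μ0 (ω (n + 1)) ∂Pinf)
        = ∑' n : ℕ, ∫⁻ ω, ({ω' : ℕ → E | τ ω' = (((n + 1 : ℕ)) : ℕ∞)}.indicator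
            (fun ω' => μ1.rnDeriv μ0 (ω' (n + 1)))) ω ∂Pinf :=
          tsum_congr fun n => (lintegral_indicator (hMeq n) _).symm
      _ = ∫⁻ ω, ∑' n : ℕ, ({ω' : ℕ → E | τ ω' = (((n + 1 : ℕ)) : ℕ∞)}.indicator
            (fun ω' => μ1.rnDeriv μ0 (ω' (n + 1)))) ω ∂Pinf :=
          (lintegral_tsum fun n => (((Measure.measurable_rnDeriv μ1 μ0).comp
            (measurable_pi_apply (n + 1))).indicator (hMeq n)).aemeasurable).symm
      _ ≤ ∫⁻ ω, μ1.rnDeriv μ0 (ω (τ ω).toNat) ∂Pinf := lintegral_mono hup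
  -- the main bound, for any admissible constant
  have main : ∀ c' : ℝ≥0∞, (∀ γ : ℕ, 1 ≤ γ →
      c' * Pinf {ω | (γ : ℕ∞) ≤ τ ω} ≤ P γ {ω | τ ω = (γ : ℕ∞)}) →
      c' * ∫⁻ ω, (τ ω : ℝ≥0∞) ∂Pinf ≤ ∫⁻ ω, μ1.rnDeriv μ0 (ω (τ ω).toNat) ∂Pinf := by
    intro c' hc'
    rw [key1, ← ENNReal.tsum_mul_left]
    refine le_trans (ENNReal.tsum_le_tsum fun n => ?_) key3
    rw [← key2 n]
    exact hc' (n + 1) (Nat.succ_le_succ (Nat.zero_le n))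
  refine ⟨main c hc, ?_⟩
  -- P γ and Pinf agree on F_{γ-1}
  have hagree : ∀ n : ℕ, P (n + 1) {ω : ℕ → E | τ ω ≤ (n : ℕ∞)}
      = Pinf {ω : ℕ → E | τ ω ≤ (n : ℕ∞)} := by
    intro n
    haveI := hP_prob (n + 1) (Nat.succ_le_succ (Nat.zero_le n))
    refine agree_on_natF (P (n + 1)) Pinf n ?_ (hτ_stop n)
    intro t htS u hu
    rw [meas_biInter_eq_prod _ (hP_indep (n + 1) (Nat.succ_le_succ (Nat.zero_le n))) t u hu,
      meas_biInter_eq_prod Pinf hPinf_indep t u hu]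
    refine Finset.prod_congr rfl fun x hx => ?_
    have hxn : x ≤ n := (Set.mem_Icc.mp (htS hx)).2
    rw [hP_marg (n + 1) (Nat.succ_le_succ (Nat.zero_le n)) x, hPinf_marg x, if_neg (by omega)]
  have hge_eq : ∀ n : ℕ, P (n + 1) {ω : ℕ → E | (((n + 1 : ℕ)) : ℕ∞) ≤ τ ω}
      = Pinf {ω : ℕ → E | (((n + 1 : ℕ)) : ℕ∞) ≤ τ ω} := by
    intro n
    haveI := hP_prob (n + 1) (Nat.succ_le_succ (Nat.zero_le n))
    rw [hS2 n, prob_compl_eq_one_sub (hMle n), prob_compl_eq_one_sub (hMle n), hagree n]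
  set c' : ℝ≥0∞ := ⨅ γ : {n : ℕ // 1 ≤ n},
      P γ {ω | τ ω = (γ : ℕ∞)} / P γ {ω | ((γ : ℕ) : ℕ∞) ≤ τ ω} with hc'def
  have hc' : ∀ γ : ℕ, 1 ≤ γ →
      c' * Pinf {ω | (γ : ℕ∞) ≤ τ ω} ≤ P γ {ω | τ ω = (γ : ℕ∞)} := by
    intro γ hγ
    obtain ⟨m, rfl⟩ : ∃ m, γ = m + 1 := ⟨γ - 1, by omega⟩
    haveI := hP_prob (m + 1) hγ
    have hle' : c' ≤ P (m + 1) {ω | τ ω = (((m + 1 : ℕ)) : ℕ∞)}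
        / P (m + 1) {ω | (((m + 1 : ℕ)) : ℕ∞) ≤ τ ω} :=
      iInf_le (fun γ : {n : ℕ // 1 ≤ n} =>
        P γ {ω | τ ω = (γ : ℕ∞)} / P γ {ω | ((γ : ℕ) : ℕ∞) ≤ τ ω}) ⟨m + 1, hγ⟩
    rw [← hge_eq m]
    by_cases h0 : P (m + 1) {ω : ℕ → E | (((m + 1 : ℕ)) : ℕ∞) ≤ τ ω} = 0
    · rw [h0, mul_zero]
      exact zero_le
    · refine le_trans (mul_le_mul_left hle' _) ?_
      rw [ENNReal.div_mul_cancel h0 (measure_ne_top _ _)]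
  have h2 := main c' hc'
  rw [ENNReal.le_div_iff_mul_le (Or.inl hτ_pos.ne') (Or.inl hτ_int.ne)]
  exact h2
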